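/- Let G = (V,E) be a strongly connected finite directed multigraph and let V′ = {v ∈ V : d⁺(v) ≥ 2}. Assume V′ is non-empty. Then the subgraph of G induced by V ∖ V′ is a directed forest: it contains no undirected cycle, i.e. there is no non-empty closed walk using pairwise distinct edges of the induced subgraph in which each edge may be traversed in either direction. -/
import Mathlib


open Filter Topology
open scoped ENNReal

section Defs

variable {A B C : Type*}

/-- The shift of a two-sided sequence by `k`. -/
def shiftBy (k : ℤ) (x : ℤ → A) : ℤ → A := fun n => x (n + k)

/-- The finite word `x_m x_{m+1} ⋯ x_{m+len-1}` read in the two-sided sequence `x`. -/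
def factorAt (x : ℤ → A) (m : ℤ) (len : ℕ) : List A :=
  (List.range len).map fun i => x (m + (i : ℤ))

/-- Extension of a morphism (given on letters) to finite words. -/
def wordImage (τ : A → List B) (w : List A) : List B := (w.map τ).flatten

/-- Composition of two morphisms. -/
def morphComp (σ : B → List C) (τ : A → List B) : A → List C :=
  fun a => wordImage σ (τ a)

/-- A morphism is non-erasing if no letter is sent to the empty word. -/
def NonErasing (τ : A → List B) : Prop := ∀ a, τ a ≠ []

/-- A morphism is positive if every target letter occurs in the image of each letter. -/
def PositiveMorph (τ : A → List B) : Prop := ∀ a : A, ∀ b : B, b ∈ τ a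

/-- A morphism is proper if all images start with the same letter and end with the same letter. -/
def ProperMorph (τ : A → List B) : Prop :=
  ∃ b b' : B, ∀ a : A, (τ a).head? = some b ∧ (τ a).getLast? = some b'

/-- Cumulative lengths of the images `τ(y_0 ⋯ y_{n-1})` (or the negative part for `n < 0`). -/
def cumLen (τ : A → List B) (y : ℤ → A) (n : ℤ) : ℤ :=
  if 0 ≤ n then ∑ i ∈ Finset.range n.toNat, ((τ (y (i : ℤ))).length : ℤ)
  else -∑ i ∈ Finset.range (-n).toNat, ((τ (y (-(i : ℤ) - 1))).length : ℤ)

/-- `z` is the two-sided concatenation of the images of the letters of `y` under `τ`,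
the image of the 0-th coordinate starting at coordinate 0. -/
def IsSeqImage (τ : A → List B) (y : ℤ → A) (z : ℤ → B) : Prop :=
  ∀ (n : ℤ) (j : Fin (τ (y n)).length), z (cumLen τ y n + ((j : ℕ) : ℤ)) = (τ (y n)).get j

/-- `(k, y)` is a centered `τ`-representation of `x` in `Y`. -/
def IsCenteredRep (τ : A → List B) (Y : Set (ℤ → A)) (x : ℤ → B) (k : ℕ) (y : ℤ → A) : Prop :=
  y ∈ Y ∧ k < (τ (y 0)).length ∧ ∃ z, IsSeqImage τ y z ∧ x = shiftBy (k : ℤ) z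

/-- `τ` is recognizable in `Y`: every point has at most one centered `τ`-representation in `Y`. -/
def RecognizableIn (τ : A → List B) (Y : Set (ℤ → A)) : Prop :=
  ∀ (x : ℤ → B) (k k' : ℕ) (y y' : ℤ → A),
    IsCenteredRep τ Y x k y → IsCenteredRep τ Y x k' y' → k = k' ∧ y = y'

/-- A two-sided sequence is aperiodic for the shift. -/
def AperiodicPoint (x : ℤ → A) : Prop := ∀ k : ℤ, k ≠ 0 → shiftBy k x ≠ x

/-- `τ` is recognizable in `Y` for aperiodic points. -/
def RecognizableInForAperiodic (τ : A → List B) (Y : Set (ℤ → A)) : Prop :=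
  ∀ (x : ℤ → B) (k k' : ℕ) (y y' : ℤ → A), AperiodicPoint x →
    IsCenteredRep τ Y x k y → IsCenteredRep τ Y x k' y' → k = k' ∧ y = y'

/-- A subshift: a closed shift-invariant subset of `A^ℤ`. -/
def IsSubshift [TopologicalSpace A] (X : Set (ℤ → A)) : Prop :=
  IsClosed X ∧ ∀ k : ℤ, ∀ x ∈ X, shiftBy k x ∈ X

/-- A minimal subshift: nonempty and every orbit is dense in it. -/
def MinimalSubshift [TopologicalSpace A] (X : Set (ℤ → A)) : Prop :=
  IsSubshift X ∧ X.Nonempty ∧ ∀ x ∈ X, X ⊆ closure {z | ∃ k : ℤ, z = shiftBy k x}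

/-- `X` is the smallest subshift containing `τ(Y)`. -/
def IsSmallestSubshiftContaining [TopologicalSpace B] (τ : A → List B)
    (Y : Set (ℤ → A)) (X : Set (ℤ → B)) : Prop :=
  IsSubshift X ∧ (∀ y ∈ Y, ∀ z, IsSeqImage τ y z → z ∈ X) ∧
    ∀ X' : Set (ℤ → B), IsSubshift X' → (∀ y ∈ Y, ∀ z, IsSeqImage τ y z → z ∈ X') → X ⊆ X'

/-- The language of a subshift. -/
def langOf (X : Set (ℤ → A)) : Set (List A) :=
  {w | ∃ x ∈ X, ∃ m : ℤ, factorAt x m w.length = w}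

/-- The complexity function of a subshift. -/
noncomputable def complexity (X : Set (ℤ → A)) (n : ℕ) : ℕ :=
  Set.ncard {w : List A | w.length = n ∧ w ∈ langOf X}

/-- `‖τ‖`, the maximal length of the image of a letter. -/
noncomputable def normSup (τ : A → List B) : ℕ := sSup (Set.range fun a => (τ a).length)

/-- `⟨τ⟩`, the minimal length of the image of a letter. -/
noncomputable def normInf (τ : A → List B) : ℕ := sInf (Set.range fun a => (τ a).length)

/-- The language of `θ(A^ℤ)`: finite words occurring in two-sided images under `θ`. -/
def morphLang (θ : A → List C) : Set (List C) :=
  {w | ∃ (x : ℤ → A) (z : ℤ → C) (m : ℤ), IsSeqImage θ x z ∧ factorAt z m w.length = w}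

/-- `p_{θ(A^ℤ)}(n)`: number of words of length `n` occurring in two-sided images under `θ`. -/
noncomputable def morphComplexity (θ : A → List C) (n : ℕ) : ℕ :=
  Set.ncard {w : List C | w.length = n ∧ w ∈ morphLang θ}

/-- The set `F(b, n, σ, L)` of right extensions of `b` in `L`. -/
def Fset (σ : B → List C) (b : B) (n : ℕ) (L : Set (List B)) : Set (List B) :=
  {w | w ∈ L ∧ (b :: w) ∈ L ∧ w.head? ≠ some b ∧
    (wordImage σ w.dropLast).length < n ∧ n ≤ (wordImage σ w).length}

/-- `τ(A^i)`: images under `τ` of words of length `i`. -/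
def imagesOfLen (τ : A → List B) (i : ℕ) : Set (List B) :=
  {w | ∃ u : List A, u.length = i ∧ wordImage τ u = w}

/-- `Comp_i(σ|τ)(n)`, the `i`-th complexity of `σ` with respect to `τ`. -/
noncomputable def relCompI [Fintype B] (σ : B → List C) (τ : A → List B) (i n : ℕ) : ℕ :=
  ∑ b : B, (Fset σ b n (imagesOfLen τ i)).ncard

/-- `Comp(σ|τ)(n)`, the complexity of `σ` with respect to `τ`. -/
noncomputable def relComp [Fintype B] (σ : B → List C) (τ : A → List B) (n : ℕ) : ℕ :=
  ∑ b : B, (Fset σ b n (morphLang τ)).ncard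

/-- Number of maximal blocks of a single repeated letter in a word. -/
def blockCount [DecidableEq B] : List B → ℕ
  | [] => 0
  | [_] => 1
  | a :: b :: l => (if a = b then 0 else 1) + blockCount (b :: l)

/-- The repetition complexity `r-comp(τ)` of a morphism. -/
noncomputable def rcomp [Fintype A] [DecidableEq B] (τ : A → List B) : ℕ :=
  ∑ a : A, blockCount (τ a)

/-- Two two-sided sequences are left asymptotic. -/
def LeftAsymptotic (x y : ℤ → A) : Prop :=
  ∃ N : ℕ, ∀ k : ℕ, N ≤ k → x (-(k : ℤ)) = y (-(k : ℤ))

/-- The shift orbits of `x` and `y` are asymptotic. -/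
def OrbitsAsymptotic (x y : ℤ → A) : Prop :=
  ∃ k k' : ℤ, LeftAsymptotic (shiftBy k x) (shiftBy k' y)

/-- A finite set `W` of non-empty words is recognizable in the subshift `X`. -/
def WordSetRecognizable [TopologicalSpace B] (W : Set (List B)) (X : Set (ℤ → B)) : Prop :=
  ∃ (A' : Type) (_ : Fintype A') (Y : Set (ℤ → A')) (τ : A' → List B),
    Set.range τ = W ∧ NonErasing τ ∧ (@IsSubshift A' ⊥ Y) ∧
    IsSmallestSubshiftContaining τ Y X ∧ RecognizableIn τ Y

end Defs

section Seq

variable {A : ℕ → Type*}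

/-- `τ_{[0,n]} = τ_0 ∘ τ_1 ∘ ⋯ ∘ τ_n`. -/
def compSeq (τ : ∀ n, A (n+1) → List (A n)) : ∀ n, A (n+1) → List (A 0)
  | 0 => τ 0
  | n+1 => fun a => wordImage (compSeq τ n) (τ (n+1) a)

/-- `τ_{[n, n+k]} = τ_n ∘ ⋯ ∘ τ_{n+k}`. -/
def compFrom (τ : ∀ n, A (n+1) → List (A n)) (n : ℕ) : ∀ k, A (n+k+1) → List (A n)
  | 0 => τ n
  | k+1 => fun a => wordImage (compFrom τ n k) (τ (n+k+1) a)

/-- The S-adic subshift generated by the directive sequence `τ`. -/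
def sadicSubshift (τ : ∀ n, A (n+1) → List (A n)) : Set (ℤ → A 0) :=
  {x | ∀ (m : ℤ) (len : ℕ), ∃ (n : ℕ) (a : A (n+1)), factorAt x m len <:+: compSeq τ n a}

/-- The level-`n` subshift `X_τ^{(n)}` of the directive sequence `τ`. -/
def levelSubshift (τ : ∀ n, A (n+1) → List (A n)) (n : ℕ) : Set (ℤ → A n) :=
  {x | ∀ (m : ℤ) (len : ℕ), ∃ (k : ℕ) (a : A (n+k+1)), factorAt x m len <:+: compFrom τ n k a}

end Seq

/-- in a strongly connected finite directed multigraph, the subgraph induced by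
the vertices of outdegree at most 1 is a directed forest (no undirected cycle). -/
theorem stmt1 {V E : Type*} [Fintype V] [Fintype E] (s r : E → V)
    (hconn : ∀ u w : V, u ≠ w → ∃ (ℓ : ℕ) (e : Fin ℓ → E) (v : Fin (ℓ+1) → V),
      Function.Injective e ∧ Function.Injective v ∧
      v 0 = u ∧ v (Fin.last ℓ) = w ∧
      ∀ i : Fin ℓ, s (e i) = v i.castSucc ∧ r (e i) = v i.succ)
    (hV' : ∃ v : V, 2 ≤ Set.ncard {e : E | s e = v}) :
    ¬ ∃ (ℓ : ℕ) (e : Fin (ℓ+1) → E) (o : Fin (ℓ+1) → Bool) (v : Fin (ℓ+2) → V),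
      Function.Injective e ∧
      (∀ i : Fin (ℓ+1), ¬ 2 ≤ Set.ncard {e' : E | s e' = s (e i)} ∧
                        ¬ 2 ≤ Set.ncard {e' : E | s e' = r (e i)}) ∧
      v 0 = v (Fin.last (ℓ+1)) ∧
      (∀ i : Fin (ℓ+1),
        (o i = true → s (e i) = v i.castSucc ∧ r (e i) = v i.succ) ∧
        (o i = false → r (e i) = v i.castSucc ∧ s (e i) = v i.succ)) := by
  classical
  rintro ⟨ℓ, e, o, v, hinj, hdeg, hclose, hor⟩
  obtain ⟨w, hw⟩ := hV'
  -- convert ncard to Finset card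
  have hncard : ∀ u : V, Set.ncard {e' : E | s e' = u}
      = (Finset.univ.filter fun e' : E => s e' = u).card := by
    intro u
    rw [Set.ncard_eq_toFinset_card']
    congr 1
    ext x
    simp
  set U : Finset V := Finset.univ.image (fun i : Fin (ℓ+1) => v i.castSucc) with hU
  have hmemU : ∀ i : Fin (ℓ+1), v i.castSucc ∈ U := by
    intro i; exact Finset.mem_image_of_mem _ (Finset.mem_univ i)
  have hsuccU : ∀ i : Fin (ℓ+1), v i.succ ∈ U := by
    intro i
    by_cases hi : (i : ℕ) < ℓ
    · have : i.succ = (⟨(i : ℕ) + 1, by omega⟩ : Fin (ℓ+1)).castSucc := by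
        ext; simp
      rw [this]; exact hmemU _
    · have hie : (i : ℕ) = ℓ := by omega
      have : i.succ = Fin.last (ℓ+1) := by ext; simp [hie]
      rw [this, ← hclose]
      have h0 : (0 : Fin (ℓ+2)) = (0 : Fin (ℓ+1)).castSucc := by ext; simp
      rw [h0]; exact hmemU _
  have hsU : ∀ i : Fin (ℓ+1), s (e i) ∈ U := by
    intro i
    cases ho : o i with
    | true => rw [((hor i).1 ho).1]; exact hmemU i
    | false => rw [((hor i).2 ho).2]; exact hsuccU i
  have hrU : ∀ i : Fin (ℓ+1), r (e i) ∈ U := by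
    intro i
    cases ho : o i with
    | true => rw [((hor i).1 ho).2]; exact hsuccU i
    | false => rw [((hor i).2 ho).1]; exact hmemU i
  -- outdegree ≤ 1 on U
  have hdegU : ∀ u ∈ U, (Finset.univ.filter fun e' : E => s e' = u).card ≤ 1 := by
    intro u hu
    obtain ⟨i, -, hi⟩ := Finset.mem_image.mp hu
    cases ho : o i with
    | true =>
      have := (hdeg i).1
      rw [hncard, ((hor i).1 ho).1, hi] at this
      omega
    | false =>
      have := (hdeg i).2
      rw [hncard, ((hor i).2 ho).1, hi] at this
      omega
  -- counting
  set S : Finset E := Finset.univ.filter (fun e' : E => s e' ∈ U) with hS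
  have hSbi : S = U.biUnion (fun u => Finset.univ.filter fun e' : E => s e' = u) := by
    ext x
    simp only [hS, Finset.mem_filter, Finset.mem_biUnion, Finset.mem_univ, true_and]
    constructor
    · intro hx; exact ⟨s x, hx, rfl⟩
    · rintro ⟨u, hu, rfl⟩; exact hu
  have hScard : S.card ≤ ℓ + 1 := by
    rw [hSbi]
    calc (U.biUnion fun u => Finset.univ.filter fun e' : E => s e' = u).card
        ≤ ∑ u ∈ U, (Finset.univ.filter fun e' : E => s e' = u).card :=
          Finset.card_biUnion_le
      _ ≤ ∑ _u ∈ U, 1 := Finset.sum_le_sum hdegU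
      _ = U.card := by simp
      _ ≤ ℓ + 1 := by
          have h1 : U.card ≤ (Finset.univ : Finset (Fin (ℓ+1))).card :=
            Finset.card_image_le
          simpa using h1
  set W : Finset E := Finset.univ.image e with hW
  have hWcard : W.card = ℓ + 1 := by
    rw [hW, Finset.card_image_of_injective _ hinj]; simp
  have hWS : W ⊆ S := by
    intro x hx
    obtain ⟨i, -, rfl⟩ := Finset.mem_image.mp hx
    simp [hS, hsU i]
  have hWeq : W = S := Finset.eq_of_subset_of_card_le hWS (by omega)
  -- closure of U under the out map
  have hclosed : ∀ x : E, s x ∈ U → r x ∈ U := by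
    intro x hx
    have : x ∈ W := by rw [hWeq]; simp [hS, hx]
    obtain ⟨i, -, rfl⟩ := Finset.mem_image.mp this
    exact hrU i
  -- w ∉ U
  have hwU : w ∉ U := by
    intro hu
    have := hdegU w hu
    rw [hncard] at hw
    omega
  have hv0 : v 0 ∈ U := by
    have : (0 : Fin (ℓ+2)) = (0 : Fin (ℓ+1)).castSucc := by ext; simp
    rw [this]; exact hmemU _
  have hne : v 0 ≠ w := fun h => hwU (h ▸ hv0)
  obtain ⟨ℓ', f, vv, -, -, h0, hlast, hstep⟩ := hconn (v 0) w hne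
  have key : ∀ k : ℕ, ∀ hk : k ≤ ℓ', vv ⟨k, by omega⟩ ∈ U := by
    intro k
    induction k with
    | zero => intro _; simpa using h0 ▸ hv0
    | succ n ih =>
      intro hk
      have hn : n < ℓ' := by omega
      have hs' := hstep ⟨n, hn⟩
      have hcs : (⟨n, hn⟩ : Fin ℓ').castSucc = (⟨n, by omega⟩ : Fin (ℓ'+1)) := by
        ext; simp
      have hsc : (⟨n, hn⟩ : Fin ℓ').succ = (⟨n+1, by omega⟩ : Fin (ℓ'+1)) := by
        ext; simp
      have hsrc : s (f ⟨n, hn⟩) ∈ U := by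
        rw [hs'.1, hcs]; exact ih (by omega)
      have := hclosed _ hsrc
      rwa [hs'.2, hsc] at this
  have : w ∈ U := by
    have := key ℓ' le_rfl
    have hl : (⟨ℓ', by omega⟩ : Fin (ℓ'+1)) = Fin.last ℓ' := by ext; simp
    rwa [hl, hlast] at this
  exact hwU this
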